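/- Let P be a rank-one projector P = |n⟩⟨m|/⟨m|n⟩ on ℂ^{2n+1} with ⟨m|S₀|m⟩ = ⟨n|S₀|n⟩ = 0 and ⟨m|n⟩ ≠ 0, let P̄ = S₀PᵀS₀, and let c ∈ ℂ, c ≠ 0. Then the dressing factor u = I + (c−1)P + (c⁻¹−1)P̄ satisfies u · S₀uᵀS₀ = I; i.e. u⁻¹ = S₀uᵀS₀, so u belongs to the orthogonal group defined by the bilinear form S₀. -/

import Mathlib

open Matrix

/-- `S₀ = Σ_{k=1}^{2n+1} (-1)^{2n+2-k} E_{k,2n+2-k}`. -/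
noncomputable def S0 (n : ℕ) : Matrix (Fin (2*n+1)) (Fin (2*n+1)) ℂ :=
  fun i j => if (i : ℕ) + (j : ℕ) = 2*n then (-1 : ℂ)^(2*n+2-((i : ℕ)+1)) else 0

/-- The rank-one projector `P = |n⟩⟨m|/⟨m|n⟩`. -/
noncomputable def Pproj (n : ℕ) (nvec mvec : Fin (2*n+1) → ℂ) :
    Matrix (Fin (2*n+1)) (Fin (2*n+1)) ℂ :=
  (mvec ⬝ᵥ nvec)⁻¹ • vecMulVec nvec mvec

lemma neg_one_pow_mod (a b : ℕ) (h : a % 2 = b % 2) : (-1 : ℂ)^a = (-1)^b := by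
  rcases Nat.even_or_odd a with ha | ha
  · have hb : Even b := Nat.even_iff.2 (by rw [← h]; exact Nat.even_iff.1 ha)
    rw [ha.neg_one_pow, hb.neg_one_pow]
  · have hb : Odd b := Nat.odd_iff.2 (by rw [← h]; exact Nat.odd_iff.1 ha)
    rw [ha.neg_one_pow, hb.neg_one_pow]

lemma S0_transpose (n : ℕ) : (S0 n)ᵀ = S0 n := by
  ext i j
  simp only [transpose_apply, S0]
  by_cases h : (i : ℕ) + (j : ℕ) = 2*n
  · rw [if_pos (by omega), if_pos h]
    exact neg_one_pow_mod _ _ (by omega)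
  · rw [if_neg (by omega), if_neg h]

lemma S0_mul_S0 (n : ℕ) : S0 n * S0 n = 1 := by
  ext i j
  rw [mul_apply]
  have hi : (i : ℕ) ≤ 2*n := by omega
  have hk : 2*n - (i : ℕ) < 2*n+1 := by omega
  have hv : ((⟨2*n - (i : ℕ), hk⟩ : Fin (2*n+1)) : ℕ) = 2*n - (i : ℕ) := rfl
  rw [Finset.sum_eq_single (⟨2*n - (i : ℕ), hk⟩ : Fin (2*n+1))]
  · simp only [S0]
    by_cases h : (i : ℕ) = (j : ℕ)
    · rw [if_pos (by omega), if_pos (by omega)]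
      have hij : i = j := Fin.ext h
      subst hij
      rw [Matrix.one_apply_eq, ← pow_add]
      rw [neg_one_pow_mod _ (2*(n+1)) (by omega)]
      simp [pow_mul]
    · rw [if_pos (by omega), if_neg (by omega)]
      rw [Matrix.one_apply_ne (by simp [Fin.ext_iff]; omega)]
      ring
  · intro b _ hb
    simp only [S0]
    rw [if_neg (by
      intro hcon
      apply hb
      apply Fin.ext
      omega)]
    ring
  · simp

lemma vecMulVec_transpose' {N : ℕ} (a b : Fin N → ℂ) :
    (vecMulVec a b)ᵀ = vecMulVec b a := by
  ext i j; simp [vecMulVec_apply, mul_comm]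

lemma mul_vecMulVec' {N : ℕ} (M : Matrix (Fin N) (Fin N) ℂ) (a b : Fin N → ℂ) :
    M * vecMulVec a b = vecMulVec (M *ᵥ a) b := by
  ext i j
  simp only [mul_apply, vecMulVec_apply, mulVec, dotProduct, Finset.sum_mul]
  exact Finset.sum_congr rfl fun k _ => by ring

lemma vecMulVec_mul' {N : ℕ} (M : Matrix (Fin N) (Fin N) ℂ) (a b : Fin N → ℂ) :
    vecMulVec a b * M = vecMulVec a (b ᵥ* M) := by
  ext i j
  simp only [mul_apply, vecMulVec_apply, vecMul, dotProduct, Finset.mul_sum]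
  exact Finset.sum_congr rfl fun k _ => by ring

lemma vecMulVec_mul_vecMulVec' {N : ℕ} (a b c d : Fin N → ℂ) :
    vecMulVec a b * vecMulVec c d = (b ⬝ᵥ c) • vecMulVec a d := by
  ext i j
  simp only [mul_apply, vecMulVec_apply, dotProduct, Matrix.smul_apply, smul_eq_mul,
    Finset.sum_mul]
  exact Finset.sum_congr rfl fun k _ => by ring

/-- under the isotropy conditions `⟨m|S₀|m⟩ = ⟨n|S₀|n⟩ = 0`, `⟨m|n⟩ ≠ 0`,
and for `c ≠ 0`, the dressing factor `u = 1 + (c−1)P + (c⁻¹−1)P̄` satisfies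
`u · S₀uᵀS₀ = 1`, i.e. `u⁻¹ = S₀uᵀS₀` and `u` belongs to the orthogonal group of `S₀`. -/
theorem stmt_6 (n : ℕ) (nvec mvec : Fin (2*n+1) → ℂ) (c : ℂ) (hc : c ≠ 0)
    (hmn : mvec ⬝ᵥ nvec ≠ 0)
    (hm : mvec ⬝ᵥ (S0 n *ᵥ mvec) = 0)
    (hn : nvec ⬝ᵥ (S0 n *ᵥ nvec) = 0) :
    (1 + (c - 1) • Pproj n nvec mvec
       + (c⁻¹ - 1) • (S0 n * (Pproj n nvec mvec)ᵀ * S0 n)) *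
      (S0 n * (1 + (c - 1) • Pproj n nvec mvec
       + (c⁻¹ - 1) • (S0 n * (Pproj n nvec mvec)ᵀ * S0 n))ᵀ * S0 n) = 1 := by
  set S := S0 n with hS
  set P := Pproj n nvec mvec with hP
  set Q := S * Pᵀ * S with hQ
  set α := (mvec ⬝ᵥ nvec)⁻¹ with hα
  have hSS : S * S = 1 := S0_mul_S0 n
  have hST : Sᵀ = S := S0_transpose n
  have hPe : P = α • vecMulVec nvec mvec := rfl
  have hPt : Pᵀ = α • vecMulVec mvec nvec := by
    rw [hPe, transpose_smul, vecMulVec_transpose']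
  have hQe : Q = α • vecMulVec (S *ᵥ mvec) (nvec ᵥ* S) := by
    rw [hQ, hPt, Matrix.mul_smul, Matrix.smul_mul, mul_vecMulVec', vecMulVec_mul']
  have hPP : P * P = P := by
    rw [hPe, smul_mul_smul_comm, vecMulVec_mul_vecMulVec', smul_smul]
    congr 1
    rw [hα]
    field_simp
  have hQQ : Q * Q = Q := by
    have h1 : Pᵀ * Pᵀ = Pᵀ := by rw [← transpose_mul, hPP]
    calc Q * Q = S * (Pᵀ * ((S * S) * (Pᵀ * S))) := by rw [hQ]; simp only [mul_assoc]
      _ = S * (Pᵀ * (Pᵀ * S)) := by rw [hSS, one_mul]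
      _ = S * ((Pᵀ * Pᵀ) * S) := by simp only [mul_assoc]
      _ = Q := by rw [h1, hQ, mul_assoc]
  have hPQ : P * Q = 0 := by
    rw [hPe, hQe, smul_mul_smul_comm, vecMulVec_mul_vecMulVec', hm]
    simp
  have hQP : Q * P = 0 := by
    rw [hPe, hQe, smul_mul_smul_comm, vecMulVec_mul_vecMulVec']
    have h0 : (nvec ᵥ* S) ⬝ᵥ nvec = 0 := by
      rw [← dotProduct_mulVec, hn]
    rw [h0]
    simp
  have hSPS : S * (S * (P * S)) * S = P := by
    rw [show S * (S * (P * S)) * S = (S * S) * (P * (S * S)) by simp only [mul_assoc],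
      hSS, one_mul, mul_one]
  have hright : S * (1 + (c - 1) • P + (c⁻¹ - 1) • Q)ᵀ * S
      = 1 + (c - 1) • Q + (c⁻¹ - 1) • P := by
    rw [transpose_add, transpose_add, transpose_one, transpose_smul, transpose_smul,
      hQ, transpose_mul, transpose_mul, hST, transpose_transpose]
    simp only [mul_add, add_mul, mul_one, one_mul, Matrix.mul_smul, Matrix.smul_mul,
      hSS]
    rw [hSPS]
  rw [hright]
  have hcoef1 : (c - 1) + (c⁻¹ - 1) + (c - 1) * (c⁻¹ - 1) = 0 := by
    field_simp
    ring
  have hcoef2 : (c - 1) + (c⁻¹ - 1) + (c⁻¹ - 1) * (c - 1) = 0 := by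
    field_simp
    ring
  rw [mul_add, mul_add, add_mul, add_mul, add_mul, add_mul, add_mul, add_mul]
  simp only [one_mul, mul_one, Matrix.smul_mul, Matrix.mul_smul, hPP, hQQ, hPQ, hQP,
    smul_zero, smul_smul]
  have hfin : (1 : Matrix (Fin (2*n+1)) (Fin (2*n+1)) ℂ) + (c - 1) • P + (c⁻¹ - 1) • Q
      + ((c - 1) • Q + (0 : Matrix (Fin (2*n+1)) (Fin (2*n+1)) ℂ)
        + ((c - 1) * (c⁻¹ - 1)) • Q)
      + ((c⁻¹ - 1) • P + ((c⁻¹ - 1) * (c - 1)) • P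
        + (0 : Matrix (Fin (2*n+1)) (Fin (2*n+1)) ℂ))
      = 1 + ((c - 1) + (c⁻¹ - 1) + (c⁻¹ - 1) * (c - 1)) • P
        + ((c - 1) + (c⁻¹ - 1) + (c - 1) * (c⁻¹ - 1)) • Q := by
    module
  rw [hfin, hcoef1, hcoef2]
  simp
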